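/- Let A be a totally unimodular real matrix and let v be a nonzero vector in the kernel of A whose support is minimal among supports of nonzero kernel vectors. Then there exists a vector w in the kernel of A with the same support as v, all of whose entries lie in {-1, 0, 1}, and every kernel vector with entries in {-1,0,1} and support equal to supp(v) is either w or -w. -/

import Mathlib

open Matrix

/-- The support of a vector. -/
def supp {α : Type*} (v : α → ℝ) : Set α := {x | v x ≠ 0}

/-- A vector is simple if all entries lie in `{-1,0,1}`. -/
def Simple {α : Type*} (v : α → ℝ) : Prop := ∀ x, v x = -1 ∨ v x = 0 ∨ v x = 1

/-- A signed circuit of the regular matroid realized by `A`: a simple kernel vector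
with support minimal among supports of nonzero kernel vectors. -/
def SignedCircuit {m E : Type*} [Fintype E] (A : Matrix m E ℝ) (C : E → ℝ) : Prop :=
  A.mulVec C = 0 ∧ C ≠ 0 ∧ Simple C ∧
    ∀ D : E → ℝ, A.mulVec D = 0 → D ≠ 0 → supp D ⊆ supp C → supp D = supp C

/-- A signed cocircuit: a simple row-space vector with support minimal among
supports of nonzero row-space vectors. -/
def SignedCocircuit {m E : Type*} [Fintype m] (A : Matrix m E ℝ) (C : E → ℝ) : Prop :=
  (∃ y, Matrix.vecMul y A = C) ∧ C ≠ 0 ∧ Simple C ∧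
    ∀ D : E → ℝ, (∃ y, Matrix.vecMul y A = D) → D ≠ 0 → supp D ⊆ supp C → supp D = supp C

lemma sum_subtype_eq_of_support {E : Type*} [Fintype E] (P : E → Prop) [DecidablePred P]
    (g : E → ℝ) (hg : ∀ e, ¬ P e → g e = 0) :
    ∑ j : {e : E // P e}, g j = ∑ e, g e := by
  rw [← Finset.sum_filter_of_ne (s := Finset.univ) (p := P)
    (fun e _ he => by by_contra h; exact he (hg e h))]
  exact (Finset.sum_subtype (Finset.univ.filter P) (by simp) g).symm

lemma exists_good_rows {m T : Type*} [Fintype m] [Fintype T] [DecidableEq m] [DecidableEq T]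
    (M : Matrix m T ℝ) (hM : ∀ y : T → ℝ, M.mulVec y = 0 → y = 0) :
    ∃ f : T → m, IsUnit (M.submatrix f id) := by
  classical
  have hinj : Function.Injective M.mulVecLin := by
    rw [← LinearMap.ker_eq_bot, LinearMap.ker_eq_bot']
    exact fun y hy => hM y hy
  have hrank : M.rank = Fintype.card T := by
    rw [Matrix.rank, LinearMap.finrank_range_of_inj hinj,
      Module.finrank_fintype_fun_eq_card]
  have hspan : Module.finrank ℝ (Submodule.span ℝ (Set.range M)) = Fintype.card T := by
    rw [show Set.range M = Set.range M.row from rfl, ← Matrix.rank_eq_finrank_span_row, hrank]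
  obtain ⟨b, hbsub, hbspan, hbli⟩ := exists_linearIndependent ℝ (Set.range M)
  have hbfin : b.Finite := (Set.finite_range _).subset hbsub
  haveI : Fintype b := hbfin.fintype
  have hcard : Fintype.card T = Fintype.card b := by
    have h1 := linearIndependent_iff_card_eq_finrank_span.mp hbli
    rw [Subtype.range_coe] at h1
    rw [h1, Set.finrank, hbspan, hspan]
  let e : T ≃ b := Fintype.equivOfCardEq hcard
  choose g hg using fun (x : b) => hbsub x.2
  refine ⟨fun j => g (e j), ?_⟩
  rw [← Matrix.linearIndependent_rows_iff_isUnit]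
  have hrow : (fun j => (M.submatrix (fun j => g (e j)) id) j) = fun j => ((e j : T → ℝ)) := by
    funext j
    ext k
    simpa using congrFun (hg (e j)) k
  rw [show (M.submatrix (fun j => g (e j)) id).row = _ from hrow]
  exact hbli.comp e e.injective

theorem support_minimal_kernel_vector_simple_representative
    {m E : Type*} [Fintype m] [Fintype E] (A : Matrix m E ℝ)
    (hA : A.IsTotallyUnimodular) (v : E → ℝ) (hv : A.mulVec v = 0) (hv0 : v ≠ 0)
    (hmin : ∀ u : E → ℝ, A.mulVec u = 0 → u ≠ 0 → supp u ⊆ supp v → supp u = supp v) :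
    ∃ w : E → ℝ, A.mulVec w = 0 ∧ supp w = supp v ∧ Simple w ∧
      ∀ u : E → ℝ, A.mulVec u = 0 → Simple u → supp u = supp v → u = w ∨ u = -w := by
  classical
  obtain ⟨e₀, he₀⟩ : ∃ e, v e ≠ 0 := by
    by_contra h
    push_neg at h
    exact hv0 (funext h)
  have he₀' : e₀ ∈ supp v := he₀
  have key : ∀ z : E → ℝ, A.mulVec z = 0 → supp z ⊆ supp v → z e₀ = 0 → z = 0 := by
    intro z hz hzs hz0
    by_contra hz'
    have hs := hmin z hz hz' hzs
    have : e₀ ∈ supp z := hs ▸ he₀'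
    exact this hz0
  set P : E → Prop := fun e => v e ≠ 0 ∧ e ≠ e₀ with hP
  let T := {e : E // P e}
  let M : Matrix m T ℝ := A.submatrix id (fun j => j.1)
  let ext : (T → ℝ) → (E → ℝ) := fun y e => if h : P e then y ⟨e, h⟩ else 0
  have hext_supp : ∀ (y : T → ℝ) (e : E), ¬ P e → ext y e = 0 := by
    intro y e he
    simp only [ext, dif_neg he]
  have hext_row : ∀ (y : T → ℝ) (i : m), ∑ j : T, A i j.1 * y j = (A.mulVec (ext y)) i := by
    intro y i
    have h1 : (A.mulVec (ext y)) i = ∑ e, A i e * ext y e := by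
      simp [Matrix.mulVec, dotProduct]
    rw [h1, ← sum_subtype_eq_of_support P (fun e => A i e * ext y e)
      (fun e he => by show A i e * ext y e = 0; rw [hext_supp y e he, mul_zero])]
    apply Finset.sum_congr rfl
    intro j _
    simp only [ext, dif_pos j.2]; rfl
  have hMker : ∀ y : T → ℝ, M.mulVec y = 0 → y = 0 := by
    intro y hy
    have h2 : ∀ i, ∑ j : T, A i j.1 * y j = 0 := by
      intro i
      have := congrFun hy i
      simpa [M, Matrix.mulVec, dotProduct] using this
    have hAext : A.mulVec (ext y) = 0 := by
      funext i
      rw [Pi.zero_apply, ← hext_row y i]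
      exact h2 i
    have hsupp : supp (ext y) ⊆ supp v := by
      intro e he
      by_contra hve
      exact he (hext_supp y e (fun hpe => hpe.1 (not_not.mp hve)))
    have hze : ext y e₀ = 0 := hext_supp y e₀ (fun hpe => hpe.2 rfl)
    have := key (ext y) hAext hsupp hze
    funext j
    have := congrFun this j.1
    simpa [ext, dif_pos j.2] using this
  obtain ⟨f, hB⟩ := exists_good_rows M hMker
  set B : Matrix T T ℝ := M.submatrix f id with hBdef
  have hBsub : B = A.submatrix f (fun j : T => j.1) := by
    ext j k
    rfl
  have hAdet : ∀ (g₁ : T → m) (g₂ : T → E), (A.submatrix g₁ g₂).det ∈ Set.range SignType.cast :=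
    fun g₁ g₂ => (Matrix.isTotallyUnimodular_iff_fintype A).mp hA T g₁ g₂
  have hBdet0 : B.det ≠ 0 := by
    have := (Matrix.isUnit_iff_isUnit_det B).mp hB
    exact (isUnit_iff_ne_zero).mp this
  have hBdet : B.det = 1 ∨ B.det = -1 := by
    obtain ⟨s, hs⟩ := hAdet f (fun j : T => j.1)
    rw [← hBsub] at hs
    cases s with
    | zero => exact absurd hs.symm (by simpa using hBdet0)
    | neg => right; rw [← hs]; simp
    | pos => left; rw [← hs]; simp
  have hBdetsq : B.det * B.det = 1 := by
    rcases hBdet with h | h <;> rw [h] <;> norm_num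
  let bcol : T → ℝ := fun j => A (f j) e₀
  let x : T → ℝ := B.det • (B.cramer (-bcol))
  have hBx : B.mulVec x = -bcol := by
    have h1 : B.mulVec (B.cramer (-bcol)) = B.det • (-bcol) := Matrix.mulVec_cramer B (-bcol)
    have h2 : B.mulVec x = B.det • (B.det • (-bcol)) := by
      rw [show x = B.det • (B.cramer (-bcol)) from rfl, Matrix.mulVec_smul, h1]
    rw [h2, smul_smul, hBdetsq, one_smul]
  have hxval : ∀ k, x k = -1 ∨ x k = 0 ∨ x k = 1 := by
    intro k
    have hdetneg : (B.updateCol k (-bcol)).det = -(B.updateCol k bcol).det := by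
      have := Matrix.det_updateCol_smul B k (-1 : ℝ) bcol
      simpa using this
    have hsub : B.updateCol k bcol = A.submatrix f (fun j : T => if j = k then e₀ else j.1) := by
      ext j l
      by_cases hlk : l = k <;> simp [Matrix.updateCol_apply, hlk, bcol, hBsub]
    obtain ⟨s, hs⟩ := hAdet f (fun j : T => if j = k then e₀ else j.1)
    rw [← hsub] at hs
    have hx : x k = B.det * (-(B.updateCol k bcol).det) := by
      show B.det * (B.cramer (-bcol)) k = _
      rw [Matrix.cramer_apply, hdetneg]
    rw [hx, ← hs]
    rcases hBdet with h | h <;> rw [h] <;> cases s <;> norm_num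
  let w : E → ℝ := fun e => (if e = e₀ then 1 else 0) + ext x e
  have hwe₀ : w e₀ = 1 := by
    have : ext x e₀ = 0 := hext_supp x e₀ (fun hpe => hpe.2 rfl)
    simp [w, this]
  have hw_unsupp : ∀ e, v e = 0 → w e = 0 := by
    intro e hve
    have hne : e ≠ e₀ := fun h => he₀ (h ▸ hve)
    have : ext x e = 0 := hext_supp x e (fun hpe => hpe.1 hve)
    simp [w, hne, this]
  have hwsimple : Simple w := by
    intro e
    by_cases he : e = e₀
    · right; right; rw [he, hwe₀]
    · by_cases hpe : P e
      · have : w e = x ⟨e, hpe⟩ := by simp [w, he, ext, dif_pos hpe]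
        rw [this]; exact hxval _
      · right; left
        have : ext x e = 0 := hext_supp x e hpe
        simp [w, he, this]
  -- value of A.mulVec w on the chosen rows
  have hrowf : ∀ j : T, (A.mulVec w) (f j) = 0 := by
    intro j
    have hsplit : w = (fun e => if e = e₀ then (1:ℝ) else 0) + ext x := rfl
    rw [hsplit, Matrix.mulVec_add]
    have hind : (A.mulVec (fun e => if e = e₀ then (1:ℝ) else 0)) (f j) = A (f j) e₀ := by
      simp [Matrix.mulVec, dotProduct, mul_ite]
    have hxx : (A.mulVec (ext x)) (f j) = -bcol j := by
      rw [← hext_row x (f j)]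
      have : ∑ j' : T, A (f j) j'.1 * x j' = (B.mulVec x) j := by
        simp [hBsub, Matrix.mulVec, dotProduct]
      rw [this, hBx]
      simp
    simp [hind, hxx, bcol]
  -- w agrees with a rescaling of v
  have hwv : w = (v e₀)⁻¹ • v := by
    have hz0 : ∀ e, ¬ P e → e ≠ e₀ → (w - (v e₀)⁻¹ • v) e = 0 := by
      intro e hpe hne
      have hve : v e = 0 := by
        by_contra hve
        exact hpe ⟨hve, hne⟩
      simp [hw_unsupp e hve, hve]
    have hBz : B.mulVec (fun j : T => (w - (v e₀)⁻¹ • v) j.1) = 0 := by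
      funext j
      have hextz : ext (fun j : T => (w - (v e₀)⁻¹ • v) j.1) = (fun e => if e = e₀ then (0:ℝ) else (w - (v e₀)⁻¹ • v) e) := by
        funext e
        by_cases he : e = e₀
        · have hnp : ¬ P e := fun hpe => hpe.2 he
          refine (hext_supp (fun j : T => (w - (v e₀)⁻¹ • v) j.1) e hnp).trans ?_
          rw [if_pos he]
        · by_cases hpe : P e
          · simp [ext, dif_pos hpe, he]
          · refine (hext_supp (fun j : T => (w - (v e₀)⁻¹ • v) j.1) e hpe).trans ?_
            rw [if_neg he, hz0 e hpe he]
      have h1 : (B.mulVec (fun j : T => (w - (v e₀)⁻¹ • v) j.1)) j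
          = ∑ j' : T, A (f j) j'.1 * (w - (v e₀)⁻¹ • v) j'.1 := by
        simp [hBsub, Matrix.mulVec, dotProduct]
      rw [Pi.zero_apply, h1, hext_row, hextz]
      have hz2 : (fun e => if e = e₀ then (0:ℝ) else (w - (v e₀)⁻¹ • v) e)
          = (w - (v e₀)⁻¹ • v) - Pi.single e₀ ((w - (v e₀)⁻¹ • v) e₀) := by
        funext e
        by_cases he : e = e₀ <;> simp [he, Pi.single_apply]
      rw [hz2, Matrix.mulVec_sub]
      have hzv : (A.mulVec (w - (v e₀)⁻¹ • v)) (f j) = 0 := by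
        rw [Matrix.mulVec_sub, Matrix.mulVec_smul, hv]
        simp [hrowf j]
      have he₀z : (w - (v e₀)⁻¹ • v) e₀ = 0 := by
        simp [hwe₀]
        field_simp; norm_num
      rw [he₀z]
      simp [hzv]
    have hzT : (fun j : T => (w - (v e₀)⁻¹ • v) j.1) = 0 := by
      have hinj := (Matrix.mulVec_injective_iff_isUnit).mpr hB
      apply hinj
      rw [hBz, Matrix.mulVec_zero]
    have : w - (v e₀)⁻¹ • v = 0 := by
      funext e
      by_cases he : e = e₀
      · subst he
        simp [hwe₀]
        field_simp; norm_num
      · by_cases hpe : P e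
        · exact congrFun hzT ⟨e, hpe⟩
        · exact hz0 e hpe he
    exact sub_eq_zero.mp this
  have hw0 : A.mulVec w = 0 := by
    rw [hwv, Matrix.mulVec_smul, hv, smul_zero]
  have hwsupp : supp w = supp v := by
    ext e
    simp only [supp, Set.mem_setOf_eq, hwv, Pi.smul_apply, smul_eq_mul]
    constructor
    · intro h hve
      exact h (by rw [hve, mul_zero])
    · intro h hc
      rcases mul_eq_zero.mp hc with h1 | h1
      · exact he₀ (inv_eq_zero.mp h1 ▸ rfl)
      · exact h h1
  refine ⟨w, hw0, hwsupp, hwsimple, ?_⟩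
  intro u hu husimple husupp
  have hue₀ : u e₀ ≠ 0 := by
    have : e₀ ∈ supp u := by rw [husupp]; exact he₀'
    exact this
  have hz : u - u e₀ • w = 0 := by
    apply key
    · rw [Matrix.mulVec_sub, Matrix.mulVec_smul, hu, hw0]
      simp
    · intro e he
      by_contra hve
      have hve' : v e = 0 := not_not.mp (fun h => hve h)
      have hue : u e = 0 := by
        by_contra hue
        have : e ∈ supp v := by rw [← husupp]; exact hue
        exact this hve'
      have hwe : w e = 0 := hw_unsupp e hve'
      exact he (by simp [hue, hwe])
    · simp [hwe₀]
  have huw : u = u e₀ • w := sub_eq_zero.mp hz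
  rcases husimple e₀ with h | h | h
  · right
    rw [huw, h]
    funext e
    simp
  · exact absurd h hue₀
  · left
    rw [huw, h, one_smul]
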